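/- Let L be a noncommutatively G-graded Lie algebra over R, free as an R-module with a homogeneous basis B = {b_v}_{v ∈ V} where V is totally ordered. Then in the universal G-graded enveloping algebra U = T(L)/I, the cosets 1 + I and b_{v₁} ⊗ ⋯ ⊗ b_{v_n} + I with v₁ ≤ ⋯ ≤ v_n (increasing) form a homogeneous R-basis of U. -/

import Mathlib

/-- The degree-`g` component of the tensor algebra `T(L)` of a `G`-graded module `L`. -/
def tensorGrading {R L G : Type*} [CommRing R] [AddCommGroup L] [Module R L] [Group G]
    (ℒ : G → Submodule R L) : G → Submodule R (TensorAlgebra R L) := fun g =>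
  Submodule.span R
    {x : TensorAlgebra R L |
      ∃ (n : ℕ) (gs : Fin n → G) (m : Fin n → L),
        (∀ i, m i ∈ ℒ (gs i)) ∧ (List.ofFn gs).prod = g ∧
          x = (List.ofFn fun i => TensorAlgebra.ι R (m i)).prod}

/-- The two-sided ideal of `T(L)` generated by the elements
`[a,b] - a ⊗ b + b ⊗ a`, as an `R`-submodule. -/
def envIdeal (R L : Type*) [CommRing R] [LieRing L] [LieAlgebra R L] :
    Submodule R (TensorAlgebra R L) :=
  Submodule.span R
    {y : TensorAlgebra R L |
      ∃ (s t : TensorAlgebra R L) (a b : L),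
        y = s * (TensorAlgebra.ι R ⁅a, b⁆ -
          TensorAlgebra.ι R a * TensorAlgebra.ι R b +
          TensorAlgebra.ι R b * TensorAlgebra.ι R a) * t}

namespace PBWTool

variable {R L V : Type*} [CommRing R] [LieRing L] [LieAlgebra R L] [LinearOrder V]

abbrev SL (V : Type*) [LinearOrder V] := {l : List V // l.Pairwise (· ≤ ·)}

abbrev FM (R V : Type*) [CommRing R] [LinearOrder V] : Type _ := SL V →₀ R

/-- Support invariant for the straightening action. -/
def Inv (v : V) (w : List V) (m : FM R V) : Prop :=
  ∀ s ∈ m.support, s.val.length ≤ w.length + 1 ∧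
    (s.val.length = w.length + 1 → (s.val : Multiset V) = v ::ₘ (w : Multiset V))

theorem sorted_cons_of_le {v u : V} {t : List V} (h : (u :: t).Pairwise (· ≤ ·))
    (hvu : v ≤ u) : (v :: u :: t).Pairwise (· ≤ ·) := by
  rw [List.pairwise_cons]
  exact ⟨fun b hb => by
    rcases List.mem_cons.1 hb with rfl | hb
    · exact hvu
    · exact le_trans hvu ((List.pairwise_cons.1 h).1 b hb), h⟩

theorem inv_single {v : V} {w : List V} (h : (v :: w).Pairwise (· ≤ ·)) :
    Inv v w (Finsupp.single (⟨v :: w, h⟩ : SL V) (1 : R)) := by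
  intro s hs
  have := Finsupp.support_single_subset hs
  simp only [Finset.mem_singleton] at this
  subst this
  simp

/-- One step of the straightening recursion, packaged with its support invariant. -/
@[simps]
noncomputable def step (v u : V) (t : List V)
    (m₁ : {m : FM R V // Inv v t m})
    (F1 : (p : SL V) → p ∈ m₁.1.support → {m : FM R V // Inv u p.1 m})
    (z : V →₀ R)
    (F2 : (q : V) → q ∈ z.support → {m : FM R V // Inv q t m}) :
    {m : FM R V // Inv v (u :: t) m} :=
  ⟨(m₁.1.support.attach.sum fun p => m₁.1 p.1 • (F1 p.1 p.2).1)
      + (z.support.attach.sum fun q => z q.1 • (F2 q.1 q.2).1), by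
    intro s hs
    simp only [List.length_cons]
    rcases Finset.mem_union.1 (Finsupp.support_add hs) with hs1 | hs2
    · obtain ⟨p, _, hp⟩ := Finsupp.mem_support_finset_sum s hs1
      have hp' := Finsupp.support_smul hp
      have h2 := (F1 p.1 p.2).2 s hp'
      have h1 := m₁.2 p.1 p.2
      constructor
      · omega
      · intro hlen
        have hlenp : p.1.val.length = t.length + 1 := by omega
        have e2 := h2.2 (by omega)
        have e1 := h1.2 hlenp
        rw [e2, e1]
        exact Multiset.cons_swap u v (t : Multiset V)
    · obtain ⟨q, _, hq⟩ := Finsupp.mem_support_finset_sum s hs2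
      have hq' := Finsupp.support_smul hq
      have h2 := (F2 q.1 q.2).2 s hq'
      constructor
      · omega
      · intro hlen
        exfalso
        omega⟩

variable (bb : Module.Basis V R L)

noncomputable def fAux (v : V) (w : List V) (hw : w.Pairwise (· ≤ ·)) :
    {m : FM R V // Inv v w m} :=
  match w, hw with
  | [], _ => ⟨Finsupp.single ⟨[v], List.pairwise_singleton _ v⟩ 1,
      inv_single (List.pairwise_singleton _ v)⟩
  | u :: t, hw =>
    if hvu : v ≤ u then
      ⟨Finsupp.single ⟨v :: u :: t, sorted_cons_of_le hw hvu⟩ 1,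
        inv_single (sorted_cons_of_le hw hvu)⟩
    else
      have ht : t.Pairwise (· ≤ ·) := hw.of_cons
      let m₁ := fAux v t ht
      step v u t m₁ (fun p hp => fAux u p.1 p.2) (bb.repr ⁅bb v, bb u⁆)
        (fun q _ => fAux q t ht)
  termination_by (w.length, w.countP fun x => decide (x < v))
  decreasing_by
  · apply Prod.Lex.left
    simp
  · rcases Nat.lt_or_ge p.val.length (t.length + 1) with h | h
    · apply Prod.Lex.left
      simpa using h
    · have hu : u < v := lt_of_not_ge hvu
      have h1 := m₁.2 p hp
      have hlen : p.val.length = t.length + 1 := le_antisymm h1.1 h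
      have hmul : (p.val : Multiset V) = v ::ₘ (t : Multiset V) := h1.2 hlen
      have hperm : p.val.Perm (v :: t) := by
        rw [← Multiset.coe_eq_coe, hmul, ← Multiset.cons_coe]
      have hcount : (p.val.countP fun x => decide (x < u)) <
          ((u :: t).countP fun x => decide (x < v)) := by
        rw [hperm.countP_eq, List.countP_cons, List.countP_cons]
        have hm : (t.countP fun x => decide (x < u)) ≤ t.countP fun x => decide (x < v) := by
          apply List.countP_mono_left
          intro x _ hx
          simp only [decide_eq_true_eq] at hx ⊢
          exact lt_trans hx hu
        simp only [decide_eq_true_eq, not_lt_of_gt hu, if_false, hu, if_true]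
        omega
      have hg : p.val.length = (u :: t).length := by simpa using hlen
      rw [hg]
      exact Prod.Lex.right _ hcount
  · apply Prod.Lex.left
    simp

/-- basis vector of the word module -/
noncomputable def bx (R : Type*) [CommRing R] {V : Type*} [LinearOrder V] (s : SL V) :
    FM R V := Finsupp.single s 1

noncomputable def Aop (v : V) : FM R V →ₗ[R] FM R V :=
  Finsupp.linearCombination R (fun s : SL V => (fAux bb v s.1 s.2).1)

noncomputable def rho : L →ₗ[R] FM R V →ₗ[R] FM R V :=
  (Finsupp.linearCombination R (Aop bb)).comp (bb.repr : L ≃ₗ[R] (V →₀ R)).toLinearMap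

lemma Aop_single (v : V) (s : SL V) : Aop bb v (bx R s) = (fAux bb v s.1 s.2).1 := by
  simp [Aop, bx]

lemma rho_apply (a : L) : rho bb a = (bb.repr a).sum fun i c => c • Aop bb i := by
  simp [rho, Finsupp.linearCombination_apply]

lemma rho_bb (v : V) : rho bb (bb v) = Aop bb v := by
  rw [rho_apply, bb.repr_self, Finsupp.sum_single_index] <;> simp

lemma rho_apply_single (a : L) (s : SL V) :
    rho bb a (bx R s) = (bb.repr a).sum fun i c => c • (fAux bb i s.1 s.2).1 := by
  rw [rho_apply]
  rw [Finsupp.sum, Finsupp.sum, LinearMap.sum_apply]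
  exact Finset.sum_congr rfl fun i _ => by rw [LinearMap.smul_apply, Aop_single]

lemma fAux_sorted (v : V) (w : List V) (hw : w.Pairwise (· ≤ ·))
    (h : (v :: w).Pairwise (· ≤ ·)) :
    (fAux bb v w hw).1 = Finsupp.single ⟨v :: w, h⟩ 1 := by
  cases w with
  | nil => simp [fAux]
  | cons u t =>
    have hvu : v ≤ u := (List.pairwise_cons.1 h).1 u List.mem_cons_self
    simp [fAux, hvu]

lemma fAux_gt (v u : V) (t : List V) (hw : (u :: t).Pairwise (· ≤ ·)) (hvu : ¬ v ≤ u) :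
    (fAux bb v (u :: t) hw).1
      = Aop bb u (fAux bb v t hw.of_cons).1
        + rho bb ⁅bb v, bb u⁆ (bx R ⟨t, hw.of_cons⟩) := by
  rw [fAux]
  simp only [dif_neg hvu, step_coe]
  congr 1
  · rw [Aop, Finsupp.linearCombination_apply, Finsupp.sum]
    rw [← Finset.sum_attach ((fAux bb v t hw.of_cons).1.support)
      (fun s => (fAux bb v t hw.of_cons).1 s • (fAux bb u s.1 s.2).1)]
  · rw [rho_apply_single, Finsupp.sum]
    rw [← Finset.sum_attach ((bb.repr ⁅bb v, bb u⁆).support)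
      (fun i => (bb.repr ⁅bb v, bb u⁆) i • (fAux bb i t hw.of_cons).1)]

lemma apply_eq_zero_of_support (D : FM R V →ₗ[R] FM R V) (m : FM R V)
    (h : ∀ s ∈ m.support, D (bx R s) = 0) : D m = 0 := by
  have hm : m = m.sum fun s c => c • bx R s := by
    simp [bx, Finsupp.smul_single, Finsupp.sum_single]
  rw [hm, map_finsuppSum]
  apply Finset.sum_eq_zero
  intro s hs
  simp only [map_smul, h s hs, smul_zero]

/-- The bilinear defect map measuring failure of `rho` to be a Lie homomorphism. -/
noncomputable def Dmap : L →ₗ[R] L →ₗ[R] (FM R V →ₗ[R] FM R V) :=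
  LinearMap.mk₂ R
    (fun a b => rho bb ⁅a, b⁆ - (rho bb a).comp (rho bb b) + (rho bb b).comp (rho bb a))
    (fun a a' b => by
      simp only [add_lie, map_add, LinearMap.add_comp, LinearMap.comp_add]; abel)
    (fun c a b => by
      simp only [smul_lie, map_smul, LinearMap.smul_comp, LinearMap.comp_smul]
      module)
    (fun a b b' => by
      simp only [lie_add, map_add, LinearMap.add_comp, LinearMap.comp_add]; abel)
    (fun c a b => by
      simp only [lie_smul, map_smul, LinearMap.smul_comp, LinearMap.comp_smul]
      module)

lemma D_eq (a b : L) (m : FM R V) :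
    Dmap bb a b m
      = rho bb ⁅a, b⁆ m - rho bb a (rho bb b m) + rho bb b (rho bb a m) := by
  simp [Dmap, LinearMap.mk₂_apply, LinearMap.sub_apply, LinearMap.add_apply,
    LinearMap.comp_apply]

lemma star_of_D {a b : L} {m : FM R V} (h : Dmap bb a b m = 0) :
    rho bb ⁅a, b⁆ m = rho bb a (rho bb b m) - rho bb b (rho bb a m) := by
  rw [D_eq, sub_add_eq_add_sub, sub_eq_zero] at h
  exact eq_sub_of_add_eq h

lemma Aop_single' (v : V) (w : List V) (hw : w.Pairwise (· ≤ ·)) :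
    Aop bb v (bx R ⟨w, hw⟩) = (fAux bb v w hw).1 := by
  simp [Aop, bx]

lemma rho_sorted_cons (c : V) (w : List V) (hw : w.Pairwise (· ≤ ·))
    (h : (c :: w).Pairwise (· ≤ ·)) :
    rho bb (bb c) (bx R ⟨w, hw⟩) = bx R ⟨c :: w, h⟩ := by
  rw [rho_bb, Aop_single', fAux_sorted bb c w hw h]; rfl

lemma rho_cons (c t : V) (w'l : List V) (hsl : (t :: w'l).Pairwise (· ≤ ·)) (htc : t < c) :
    rho bb (bb c) (bx R ⟨t :: w'l, hsl⟩)
      = rho bb (bb t) (rho bb (bb c) (bx R ⟨w'l, hsl.of_cons⟩))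
        + rho bb ⁅bb c, bb t⁆ (bx R ⟨w'l, hsl.of_cons⟩) := by
  rw [rho_bb, Aop_single', fAux_gt bb c t w'l hsl (not_le.2 htc),
    ← Aop_single' bb c w'l hsl.of_cons, ← rho_bb bb c, ← rho_bb bb t]

lemma star_easyD {v u : V} (huv : u < v) (s : SL V)
    (hus : (u :: s.1).Pairwise (· ≤ ·)) :
    Dmap bb (bb v) (bb u) (bx R s) = 0 := by
  rw [D_eq]
  have h1 : rho bb (bb u) (bx R s) = bx R ⟨u :: s.1, hus⟩ :=
    rho_sorted_cons bb u s.1 s.2 hus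
  have h2 : rho bb (bb v) (bx R ⟨u :: s.1, hus⟩)
      = rho bb (bb u) (rho bb (bb v) (bx R s)) + rho bb ⁅bb v, bb u⁆ (bx R s) :=
    rho_cons bb v u s.1 hus huv
  rw [h1, h2]
  abel

lemma jacobi_aux (x y z : L) : ⁅⁅x, y⁆, z⁆ = ⁅⁅x, z⁆, y⁆ - ⁅⁅y, z⁆, x⁆ := by
  have hzy : ⁅z, y⁆ = -⁅y, z⁆ := (lie_skew z y).symm
  have hzx : ⁅z, x⁆ = -⁅x, z⁆ := (lie_skew z x).symm
  have hyx : ⁅y, x⁆ = -⁅x, y⁆ := (lie_skew y x).symm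
  have j : ⁅x, ⁅y, z⁆⁆ + ⁅y, ⁅z, x⁆⁆ + ⁅z, ⁅x, y⁆⁆ = 0 := lie_jacobi x y z
  rw [hzx, lie_neg] at j
  have hS : ⁅z, ⁅x, y⁆⁆ = -(⁅x, ⁅y, z⁆⁆ + -⁅y, ⁅x, z⁆⁆) := by
    rwa [add_comm, add_eq_zero_iff_eq_neg] at j
  rw [lie_lie x y z, lie_lie x z y, lie_lie y z x, hzy, hzx, hyx, lie_neg, lie_neg,
    lie_neg, hS]
  abel

set_option maxHeartbeats 1000000 in
lemma star_core (n : ℕ)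
    (ih : ∀ s : SL V, s.1.length < n → ∀ a b : L, Dmap bb a b (bx R s) = 0)
    (s : SL V) (hs : s.1.length ≤ n) {v u : V} (huv : u < v) :
    Dmap bb (bb v) (bb u) (bx R s) = 0 := by
  by_cases hsort : (u :: s.1).Pairwise (· ≤ ·)
  · exact star_easyD bb huv s hsort
  · obtain ⟨l, hsl⟩ := s
    cases l with
    | nil => exact absurd (List.pairwise_singleton _ u) hsort
    | cons t w'l =>
      have htu : t < u := not_le.1 fun h => hsort (sorted_cons_of_le hsl h)
      have htv : t < v := htu.trans huv
      have hlen : w'l.length < n := by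
        simp only [List.length_cons] at hs; omega
      -- star at the shorter word, for arbitrary elements
      have sw : ∀ a b : L,
          rho bb ⁅a, b⁆ (bx R ⟨w'l, hsl.of_cons⟩)
            = rho bb a (rho bb b (bx R ⟨w'l, hsl.of_cons⟩))
              - rho bb b (rho bb a (bx R ⟨w'l, hsl.of_cons⟩)) :=
        fun a b => star_of_D bb (ih ⟨w'l, hsl.of_cons⟩ hlen a b)
      -- mixed vanishing
      have hmix : ∀ c u' : V, t < c → t < u' →
          Dmap bb (bb c) (bb t) (rho bb (bb u') (bx R ⟨w'l, hsl.of_cons⟩)) = 0 := by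
        intro c u' hc hu'
        have hrw : rho bb (bb u') (bx R ⟨w'l, hsl.of_cons⟩)
            = (fAux bb u' w'l hsl.of_cons).1 := by rw [rho_bb, Aop_single']
        rw [hrw]
        apply apply_eq_zero_of_support
        intro s' hs'
        have hinv := (fAux bb u' w'l hsl.of_cons).2 s' hs'
        rcases Nat.lt_or_ge s'.1.length (w'l.length + 1) with hl | hl
        · exact ih s' (by omega) _ _
        · have hlen' : s'.1.length = w'l.length + 1 := le_antisymm hinv.1 hl
          have hmul := hinv.2 hlen'
          have hsort' : (t :: s'.1).Pairwise (· ≤ ·) := by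
            rw [List.pairwise_cons]
            refine ⟨fun x hx => ?_, s'.2⟩
            have hxm : x ∈ (s'.1 : Multiset V) := Multiset.mem_coe.2 hx
            rw [hmul] at hxm
            rcases Multiset.mem_cons.1 hxm with rfl | hxw
            · exact le_of_lt hu'
            · exact (List.pairwise_cons.1 hsl).1 x (Multiset.mem_coe.1 hxw)
          exact star_easyD bb hc s' hsort'
      have hxs : bx R (⟨t :: w'l, hsl⟩ : SL V)
          = rho bb (bb t) (bx R ⟨w'l, hsl.of_cons⟩) :=
        (rho_sorted_cons bb t w'l hsl.of_cons hsl).symm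
      have hPu := rho_cons bb u t w'l hsl htu
      have hPv := rho_cons bb v t w'l hsl htv
      have f1 : rho bb ⁅bb v, bb u⁆ (rho bb (bb t) (bx R ⟨w'l, hsl.of_cons⟩))
          = rho bb ⁅⁅bb v, bb u⁆, bb t⁆ (bx R ⟨w'l, hsl.of_cons⟩)
            + rho bb (bb t) (rho bb ⁅bb v, bb u⁆ (bx R ⟨w'l, hsl.of_cons⟩)) :=
        sub_eq_iff_eq_add.1 (sw ⁅bb v, bb u⁆ (bb t)).symm
      have f2 := sw (bb v) (bb u)
      have f3 : rho bb (bb v) (rho bb (bb t) (rho bb (bb u) (bx R ⟨w'l, hsl.of_cons⟩)))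
          = rho bb ⁅bb v, bb t⁆ (rho bb (bb u) (bx R ⟨w'l, hsl.of_cons⟩))
            + rho bb (bb t) (rho bb (bb v) (rho bb (bb u) (bx R ⟨w'l, hsl.of_cons⟩))) :=
        sub_eq_iff_eq_add.1 (star_of_D bb (hmix v u htv htu)).symm
      have f4 : rho bb (bb u) (rho bb (bb t) (rho bb (bb v) (bx R ⟨w'l, hsl.of_cons⟩)))
          = rho bb ⁅bb u, bb t⁆ (rho bb (bb v) (bx R ⟨w'l, hsl.of_cons⟩))
            + rho bb (bb t) (rho bb (bb u) (rho bb (bb v) (bx R ⟨w'l, hsl.of_cons⟩))) :=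
        sub_eq_iff_eq_add.1 (star_of_D bb (hmix u v htu htv)).symm
      have f5 : rho bb ⁅bb v, bb t⁆ (rho bb (bb u) (bx R ⟨w'l, hsl.of_cons⟩))
          = rho bb ⁅⁅bb v, bb t⁆, bb u⁆ (bx R ⟨w'l, hsl.of_cons⟩)
            + rho bb (bb u) (rho bb ⁅bb v, bb t⁆ (bx R ⟨w'l, hsl.of_cons⟩)) :=
        sub_eq_iff_eq_add.1 (sw ⁅bb v, bb t⁆ (bb u)).symm
      have f6 : rho bb ⁅bb u, bb t⁆ (rho bb (bb v) (bx R ⟨w'l, hsl.of_cons⟩))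
          = rho bb ⁅⁅bb u, bb t⁆, bb v⁆ (bx R ⟨w'l, hsl.of_cons⟩)
            + rho bb (bb v) (rho bb ⁅bb u, bb t⁆ (bx R ⟨w'l, hsl.of_cons⟩)) :=
        sub_eq_iff_eq_add.1 (sw ⁅bb u, bb t⁆ (bb v)).symm
      rw [D_eq, hPu, hPv, hxs]
      simp only [map_add]
      rw [f1, f2, f3, f4, f5, f6, jacobi_aux (bb v) (bb u) (bb t), map_sub]
      simp only [map_sub, LinearMap.sub_apply]
      abel

lemma star_crux (n : ℕ)
    (ih : ∀ s : SL V, s.1.length < n → ∀ a b : L, Dmap bb a b (bx R s) = 0)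
    (s : SL V) (hs : s.1.length ≤ n) (a b : L) : Dmap bb a b (bx R s) = 0 := by
  suffices hbas : ∀ v u : V, Dmap bb (bb v) (bb u) (bx R s) = 0 by
    have hE : (Dmap bb).compr₂ (LinearMap.applyₗ (bx R s)) = 0 :=
      bb.ext fun v => bb.ext fun u => by
        simpa [LinearMap.compr₂_apply] using hbas v u
    have := LinearMap.congr_fun (LinearMap.congr_fun hE a) b
    simpa [LinearMap.compr₂_apply] using this
  intro v u
  rcases lt_trichotomy u v with huv | rfl | hvu
  · exact star_core bb n ih s hs huv
  · simp [D_eq]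
  · have h := star_core bb n ih s hs hvu
    have hflip : Dmap bb (bb v) (bb u) (bx R s) = - Dmap bb (bb u) (bb v) (bx R s) := by
      rw [D_eq, D_eq, show ⁅bb v, bb u⁆ = -⁅bb u, bb v⁆ from (lie_skew (bb v) (bb u)).symm,
        map_neg]
      simp only [LinearMap.neg_apply]
      abel
    rw [hflip, h, neg_zero]

lemma star_all (a b : L) (s : SL V) : Dmap bb a b (bx R s) = 0 := by
  suffices h : ∀ n (s : SL V), s.1.length ≤ n → ∀ a b : L, Dmap bb a b (bx R s) = 0 from
    h s.1.length s le_rfl a b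
  intro n
  induction n using Nat.strong_induction_on with
  | _ n ih =>
    intro s hs a b
    exact star_crux bb n (fun s' hs' => ih s'.1.length hs' s' le_rfl) s hs a b

lemma rho_bracket (a b : L) :
    rho bb ⁅a, b⁆ = (rho bb a).comp (rho bb b) - (rho bb b).comp (rho bb a) := by
  have hz : Dmap bb a b = 0 := by
    apply Finsupp.lhom_ext
    intro s r
    have : (Finsupp.single s r : FM R V) = r • bx R s := by
      simp [bx, Finsupp.smul_single]
    rw [this, map_smul, star_all bb a b s, smul_zero]
    rfl
  have h2 : rho bb ⁅a, b⁆ - (rho bb a).comp (rho bb b) + (rho bb b).comp (rho bb a) = 0 := by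
    simpa [Dmap, LinearMap.mk₂_apply] using hz
  have h3 : rho bb ⁅a, b⁆ + (rho bb b).comp (rho bb a)
      = (rho bb a).comp (rho bb b) := by
    rw [← sub_eq_zero]
    calc rho bb ⁅a, b⁆ + (rho bb b).comp (rho bb a) - (rho bb a).comp (rho bb b)
        = rho bb ⁅a, b⁆ - (rho bb a).comp (rho bb b) + (rho bb b).comp (rho bb a) := by abel
      _ = 0 := h2
  rw [← h3]
  abel

section Tensor

noncomputable def piT : TensorAlgebra R L →ₐ[R] Module.End R (FM R V) :=
  TensorAlgebra.lift R (rho bb : L →ₗ[R] Module.End R (FM R V))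

noncomputable def phi : TensorAlgebra R L →ₗ[R] FM R V :=
  (LinearMap.applyₗ (bx R ⟨[], List.Pairwise.nil⟩)).comp (piT bb).toLinearMap

lemma phi_apply (u : TensorAlgebra R L) :
    phi bb u = piT bb u (bx R ⟨[], List.Pairwise.nil⟩) := rfl

lemma piT_ι (a : L) : piT bb (TensorAlgebra.ι R a) = rho bb a := by
  simp [piT]

noncomputable def mon (l : List V) : TensorAlgebra R L :=
  (l.map fun v => TensorAlgebra.ι R (bb v)).prod

lemma mon_nil : mon bb ([] : List V) = 1 := rfl

lemma mon_cons (v : V) (l : List V) :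
    mon bb (v :: l) = TensorAlgebra.ι R (bb v) * mon bb l := rfl

lemma mon_append (l₁ l₂ : List V) : mon bb (l₁ ++ l₂) = mon bb l₁ * mon bb l₂ := by
  simp [mon]

lemma piT_gen_eq_zero (a b : L) :
    piT bb (TensorAlgebra.ι R ⁅a, b⁆ -
      TensorAlgebra.ι R a * TensorAlgebra.ι R b +
      TensorAlgebra.ι R b * TensorAlgebra.ι R a) = 0 := by
  rw [map_add, map_sub, map_mul, map_mul, piT_ι, piT_ι, piT_ι, rho_bracket]
  rw [Module.End.mul_eq_comp, Module.End.mul_eq_comp]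
  abel

lemma phi_ideal : envIdeal R L ≤ LinearMap.ker (phi bb) := by
  rw [envIdeal, Submodule.span_le]
  rintro y ⟨s, t, a, b, rfl⟩
  simp only [SetLike.mem_coe, LinearMap.mem_ker, phi_apply, map_mul,
    Module.End.mul_apply, piT_gen_eq_zero, LinearMap.zero_apply, map_zero]

lemma phi_mon (l : List V) (hl : l.Pairwise (· ≤ ·)) :
    phi bb (mon bb l) = bx R ⟨l, hl⟩ := by
  induction l with
  | nil => rw [mon_nil, phi_apply, map_one]; rfl
  | cons v l ih =>
    rw [mon_cons, phi_apply, map_mul, Module.End.mul_apply, piT_ι, ← phi_apply,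
      ih hl.of_cons, rho_sorted_cons bb v l hl.of_cons hl]

noncomputable def Phi : FM R V →ₗ[R] (TensorAlgebra R L ⧸ envIdeal R L) :=
  Finsupp.linearCombination R fun s : SL V => (envIdeal R L).mkQ (mon bb s.1)

lemma Phi_single (s : SL V) : Phi bb (bx R s) = (envIdeal R L).mkQ (mon bb s.1) := by
  simp [Phi, bx]

lemma mon_span : Submodule.span R (Set.range (mon bb)) = ⊤ := by
  rw [eq_top_iff]
  intro x hx
  clear hx
  induction x using TensorAlgebra.induction with
  | algebraMap r =>
    rw [Algebra.algebraMap_eq_smul_one]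
    exact Submodule.smul_mem _ r (Submodule.subset_span ⟨[], rfl⟩)
  | ι a =>
    have ha : a = Finsupp.linearCombination R bb (bb.repr a) :=
      (bb.linearCombination_repr a).symm
    rw [ha, Finsupp.linearCombination_apply, map_finsuppSum]
    apply Submodule.sum_mem
    intro v _
    simp only [map_smul]
    apply Submodule.smul_mem
    apply Submodule.subset_span
    exact ⟨[v], by simp [mon]⟩
  | mul a b ha hb =>
    have h := Submodule.mul_mem_mul ha hb
    rw [Submodule.span_mul_span] at h
    refine Submodule.span_le.2 ?_ h
    rintro x ⟨p, ⟨u, rfl⟩, q, ⟨w, rfl⟩, rfl⟩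
    exact Submodule.subset_span ⟨u ++ w, mon_append bb u w⟩
  | add a b ha hb => exact Submodule.add_mem _ ha hb

def invc : List V → ℕ
  | [] => 0
  | a :: t => (t.countP fun x => decide (x < a)) + invc t

lemma invc_swap (u : List V) (a b : V) (t : List V) (hba : b < a) :
    invc (u ++ a :: b :: t) = invc (u ++ b :: a :: t) + 1 := by
  induction u with
  | nil =>
    simp only [List.nil_append, invc, List.countP_cons, decide_eq_true_eq]
    have h1 : (if b < a then 1 else 0) = 1 := if_pos hba
    have h2 : (if a < b then 1 else 0) = 0 := if_neg (not_lt_of_gt hba)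
    omega
  | cons c u ih =>
    simp only [List.cons_append, invc, List.append_eq]
    have hc : ((u ++ a :: b :: t).countP fun x => decide (x < c))
        = ((u ++ b :: a :: t).countP fun x => decide (x < c)) := by
      simp only [List.countP_append, List.countP_cons]
      omega
    omega

lemma exists_descent {l : List V} (h : ¬ l.Pairwise (· ≤ ·)) :
    ∃ u a b t, l = u ++ a :: b :: t ∧ b < a := by
  induction l with
  | nil => exact absurd List.Pairwise.nil h
  | cons a l ih =>
    cases l with
    | nil => exact absurd (List.pairwise_singleton _ a) h
    | cons b t =>
      by_cases hab : a ≤ b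
      · have hnb : ¬ (b :: t).Pairwise (· ≤ ·) := fun hs => h (sorted_cons_of_le hs hab)
        obtain ⟨u, a', b', t', heq, hlt⟩ := ih hnb
        exact ⟨a :: u, a', b', t', by rw [heq, List.cons_append], hlt⟩
      · exact ⟨[], a, b, t, rfl, not_le.1 hab⟩

lemma mon_two (u t : List V) (a b : V) :
    mon bb (u ++ a :: b :: t)
      = mon bb u * (TensorAlgebra.ι R (bb a) * TensorAlgebra.ι R (bb b)) * mon bb t := by
  simp [mon_append, mon_cons, mul_assoc]

lemma mon_one_mid (u t : List V) (x : V) :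
    mon bb (u ++ x :: t) = mon bb u * TensorAlgebra.ι R (bb x) * mon bb t := by
  simp [mon_append, mon_cons, mul_assoc]

set_option maxHeartbeats 1000000 in
lemma straighten (w : List V) : (envIdeal R L).mkQ (mon bb w) ∈ LinearMap.range (Phi bb) := by
  generalize hn : w.length = n
  induction n using Nat.strong_induction_on generalizing w with
  | _ n ihn =>
  generalize hk : invc w = k
  induction k using Nat.strong_induction_on generalizing w with
  | _ k ihk =>
    by_cases hw : w.Pairwise (· ≤ ·)
    · exact ⟨bx R ⟨w, hw⟩, Phi_single bb ⟨w, hw⟩⟩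
    · obtain ⟨u, a, b, t, rfl, hba⟩ := exists_descent hw
      have h0 : (envIdeal R L).mkQ (mon bb u * (TensorAlgebra.ι R ⁅bb a, bb b⁆ -
          TensorAlgebra.ι R (bb a) * TensorAlgebra.ι R (bb b) +
          TensorAlgebra.ι R (bb b) * TensorAlgebra.ι R (bb a)) * mon bb t) = 0 := by
        rw [Submodule.mkQ_apply, Submodule.Quotient.mk_eq_zero]
        exact Submodule.subset_span ⟨mon bb u, mon bb t, bb a, bb b, rfl⟩
      have hdist : mon bb u * (TensorAlgebra.ι R ⁅bb a, bb b⁆ -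
          TensorAlgebra.ι R (bb a) * TensorAlgebra.ι R (bb b) +
          TensorAlgebra.ι R (bb b) * TensorAlgebra.ι R (bb a)) * mon bb t
          = mon bb u * TensorAlgebra.ι R ⁅bb a, bb b⁆ * mon bb t
            - mon bb (u ++ a :: b :: t) + mon bb (u ++ b :: a :: t) := by
        rw [mon_two bb u t a b, mon_two bb u t b a]
        noncomm_ring
      rw [hdist] at h0
      have hM : (envIdeal R L).mkQ (mon bb (u ++ a :: b :: t))
          = (envIdeal R L).mkQ (mon bb (u ++ b :: a :: t))
            + (envIdeal R L).mkQ (mon bb u * TensorAlgebra.ι R ⁅bb a, bb b⁆ * mon bb t) := by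
        rw [map_add, map_sub] at h0
        have h4 : (envIdeal R L).mkQ (mon bb (u ++ a :: b :: t))
            - ((envIdeal R L).mkQ (mon bb (u ++ b :: a :: t))
              + (envIdeal R L).mkQ (mon bb u * TensorAlgebra.ι R ⁅bb a, bb b⁆ * mon bb t))
            = -((envIdeal R L).mkQ (mon bb u * TensorAlgebra.ι R ⁅bb a, bb b⁆ * mon bb t)
              - (envIdeal R L).mkQ (mon bb (u ++ a :: b :: t))
              + (envIdeal R L).mkQ (mon bb (u ++ b :: a :: t))) := by abel
        rw [← sub_eq_zero, h4, h0, neg_zero]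
      rw [hM]
      apply Submodule.add_mem
      · have hlen : (u ++ b :: a :: t).length = n := by simpa using hn
        have hinv : invc (u ++ a :: b :: t) = invc (u ++ b :: a :: t) + 1 :=
          invc_swap u a b t hba
        exact ihk (invc (u ++ b :: a :: t)) (by omega) (u ++ b :: a :: t) hlen rfl
      · have hTeq : ∀ y : TensorAlgebra R L,
            (envIdeal R L).mkQ (mon bb u * y * mon bb t)
              = ((envIdeal R L).mkQ.comp ((LinearMap.mulRight R (mon bb t)).comp
                  (LinearMap.mulLeft R (mon bb u)))) y := fun y => rfl
        rw [hTeq]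
        have hz : (⁅bb a, bb b⁆ : L) = Finsupp.linearCombination R bb (bb.repr ⁅bb a, bb b⁆) :=
          (bb.linearCombination_repr _).symm
        rw [hz, Finsupp.linearCombination_apply, map_finsuppSum, map_finsuppSum]
        apply Submodule.sum_mem
        intro x hx
        simp only [map_smul]
        apply Submodule.smul_mem
        rw [← hTeq, ← mon_one_mid]
        have hlt : (u ++ x :: t).length < n := by
          simp only [List.length_append, List.length_cons] at hn ⊢
          omega
        exact ihn (u ++ x :: t).length hlt (u ++ x :: t) rfl

lemma phi_vanish : envIdeal R L ≤ LinearMap.ker (phi bb) := phi_ideal bb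

noncomputable def phiBar : (TensorAlgebra R L ⧸ envIdeal R L) →ₗ[R] FM R V :=
  (envIdeal R L).liftQ (phi bb) (phi_ideal bb)

lemma phiBar_Phi (m : FM R V) : phiBar bb (Phi bb m) = m := by
  have h : (phiBar bb).comp (Phi bb) = LinearMap.id := by
    apply Finsupp.lhom_ext
    intro s r
    have hs : (Finsupp.single s r : FM R V) = r • bx R s := by
      simp [bx, Finsupp.smul_single]
    rw [hs]
    simp only [LinearMap.comp_apply, map_smul, LinearMap.id_apply]
    rw [Phi_single, phiBar, Submodule.mkQ_apply, Submodule.liftQ_apply, phi_mon bb s.1 s.2]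
  exact LinearMap.congr_fun h m

lemma Phi_bijective : Function.Bijective (Phi bb) := by
  constructor
  · intro m m' h
    have := congrArg (phiBar bb) h
    rwa [phiBar_Phi, phiBar_Phi] at this
  · intro q
    obtain ⟨x, rfl⟩ := Submodule.mkQ_surjective (envIdeal R L) q
    have hx : x ∈ Submodule.span R (Set.range (mon bb)) := by
      rw [mon_span]; trivial
    have : (envIdeal R L).mkQ x ∈ LinearMap.range (Phi bb) := by
      induction hx using Submodule.span_induction with
      | mem y hy => obtain ⟨l, rfl⟩ := hy; exact straighten bb l
      | zero => rw [map_zero]; exact Submodule.zero_mem _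
      | add y z _ _ hy hz => rw [map_add]; exact Submodule.add_mem _ hy hz
      | smul c y _ hy => rw [map_smul]; exact Submodule.smul_mem _ c hy
    exact this

noncomputable def pbwEquiv : FM R V ≃ₗ[R] (TensorAlgebra R L ⧸ envIdeal R L) :=
  LinearEquiv.ofBijective (Phi bb) (Phi_bijective bb)

noncomputable def pbwBasis : Module.Basis (SL V) R (TensorAlgebra R L ⧸ envIdeal R L) :=
  Module.Basis.ofRepr (pbwEquiv bb).symm

lemma pbwBasis_apply (l : SL V) :
    pbwBasis bb l = (envIdeal R L).mkQ (mon bb l.1) := by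
  have h1 : pbwBasis bb l = (pbwBasis bb).repr.symm (Finsupp.single l 1) :=
    ((pbwBasis bb).repr_symm_single_one l).symm
  have h2 : (pbwBasis bb).repr = (pbwEquiv bb).symm := rfl
  rw [h1, h2, LinearEquiv.symm_symm]
  have h3 : (pbwEquiv bb) (Finsupp.single l 1) = Phi bb (Finsupp.single l 1) := rfl
  rw [h3, ← Phi_single bb l]
  rfl

end Tensor


end PBWTool

/-- Graded Poincaré–Birkhoff–Witt theorem: if `L` is a noncommutatively `G`-graded Lie
algebra, free with a homogeneous basis `{b_v}_{v ∈ V}` indexed by a totally ordered set,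
then the cosets `1 + I` and `b_{v₁} ⊗ ⋯ ⊗ b_{v_n} + I` with `v₁ ≤ ⋯ ≤ v_n` form a
homogeneous basis of `U = T(L)/I`. -/
theorem graded_poincare_birkhoff_witt
    {R L G V : Type*} [CommRing R] [LieRing L] [LieAlgebra R L] [Group G] [DecidableEq G]
    [LinearOrder V]
    (ℒ : G → Submodule R L)
    (hdecomp : DirectSum.IsInternal ℒ)
    (hbr : ∀ g h : G, ∀ a ∈ ℒ g, ∀ b ∈ ℒ h, ⁅a, b⁆ ∈ ℒ (g * h) ⊔ ℒ (h * g))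
    (bb : Module.Basis V R L) (hb : ∀ v : V, ∃ g : G, bb v ∈ ℒ g) :
    ∃ Bs : Module.Basis {l : List V // l.Pairwise (· ≤ ·)} R (TensorAlgebra R L ⧸ envIdeal R L),
      (∀ l : {l : List V // l.Pairwise (· ≤ ·)},
        Bs l = Submodule.mkQ (envIdeal R L)
          ((l.val.map fun v => TensorAlgebra.ι R (bb v)).prod)) ∧
      ∀ l : {l : List V // l.Pairwise (· ≤ ·)},
        ∃ g : G, Bs l ∈ (tensorGrading ℒ g).map (Submodule.mkQ (envIdeal R L)) := by
  classical
  refine ⟨PBWTool.pbwBasis bb, fun l => PBWTool.pbwBasis_apply bb l, ?_⟩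
  intro l
  choose gd hgd using hb
  refine ⟨(l.1.map gd).prod, ?_⟩
  rw [PBWTool.pbwBasis_apply bb l]
  refine Submodule.mem_map_of_mem ?_
  apply Submodule.subset_span
  refine ⟨l.1.length, fun i => gd l.1[i], fun i => bb l.1[i], fun i => hgd _, ?_, ?_⟩
  · exact congrArg List.prod (List.ofFn_getElem_eq_map l.1 gd)
  · show PBWTool.mon bb l.1 = _
    rw [PBWTool.mon]
    exact (congrArg List.prod
      (List.ofFn_getElem_eq_map l.1 (fun v => TensorAlgebra.ι R (bb v)))).symm
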